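/- If the MSEL_Σ2 sequent ⊢ ?^∞Π, ⟨c₀⟩ is derivable in the (unfocused) sequent calculus for MSEL_Σ2, then the two-register Minsky machine halts from the initial configuration c₀. -/

import Mathlib

namespace Msel

/-- Subexponential labels of the signature `Σ₂ = ⟨{∞, a, b}, {∞}, ≤⟩`. -/
inductive Lbl : Type
  | inf  -- the unbounded label ∞
  | la   -- the bounded label a
  | lb   -- the bounded label b
deriving DecidableEq

/-- The pre-order on labels: the reflexive-transitive closure of `a ≤ ∞` and `b ≤ ∞`. -/
def Lbl.le (u v : Lbl) : Prop := u = v ∨ v = Lbl.inf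

/-- A label is unbounded iff it is ∞. -/
def Lbl.unb (u : Lbl) : Prop := u = Lbl.inf

/-- Formulas of multiplicative subexponential logic MSEL_Σ₂.
Atoms are named by natural numbers. -/
inductive Fm : Type
  | atom (p : ℕ)            -- atom p
  | natom (p : ℕ)           -- negated atom ¬p
  | tens (A B : Fm)         -- A ⊗ B
  | one                     -- 1
  | par (A B : Fm)          -- A ⅋ B
  | bot                     -- ⊥
  | bang (u : Lbl) (A : Fm) -- !^u A
  | qm (u : Lbl) (A : Fm)   -- ?^u A
deriving DecidableEq

/-- The (unfocused) one-sided sequent calculus for MSEL_Σ₂; `Der Γ` means `⊢ Γ` is derivable. -/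
inductive Der : Multiset Fm → Prop
  | init (p : ℕ) : Der {Fm.atom p, Fm.natom p}
  | tens {Γ Δ : Multiset Fm} {A B : Fm} :
      Der (A ::ₘ Γ) → Der (B ::ₘ Δ) → Der (Fm.tens A B ::ₘ (Γ + Δ))
  | one : Der {Fm.one}
  | par {Γ : Multiset Fm} {A B : Fm} :
      Der (A ::ₘ B ::ₘ Γ) → Der (Fm.par A B ::ₘ Γ)
  | bot {Γ : Multiset Fm} : Der Γ → Der (Fm.bot ::ₘ Γ)
  | qm {Γ : Multiset Fm} {A : Fm} {u : Lbl} :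
      Der (A ::ₘ Γ) → Der (Fm.qm u A ::ₘ Γ)
  | bang {Γ : Multiset Fm} {C : Fm} {u : Lbl} :
      (∀ F ∈ Γ, ∃ v B, F = Fm.qm v B ∧ Lbl.le u v) →
      Der (C ::ₘ Γ) → Der (Fm.bang u C ::ₘ Γ)
  | weak {Γ : Multiset Fm} {A : Fm} :
      Der Γ → Der (Fm.qm Lbl.inf A ::ₘ Γ)
  | contr {Γ : Multiset Fm} {A : Fm} :
      Der (Fm.qm Lbl.inf A ::ₘ Fm.qm Lbl.inf A ::ₘ Γ) →
      Der (Fm.qm Lbl.inf A ::ₘ Γ)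

/-- Positive formulas: atoms, ⊗, 1, !. -/
def Fm.isPos : Fm → Prop
  | .atom _ => True
  | .tens _ _ => True
  | .one => True
  | .bang _ _ => True
  | _ => False

/-- Negative formulas: negated atoms, ⅋, ⊥, ?. -/
def Fm.isNeg : Fm → Prop
  | .natom _ => True
  | .par _ _ => True
  | .bot => True
  | .qm _ _ => True
  | _ => False

/-- Neutral formulas: positive formulas, atoms, negated atoms and ?-formulas
(i.e. everything except ⅋ and ⊥). -/
def Fm.isNeutral : Fm → Prop
  | .par _ _ => False
  | .bot => False
  | _ => True

/-- The focused sequent calculus for MSEL_Σ₂.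
`FDer Γ none` is the unfocused sequent `⊢ Γ`;
`FDer Ω (some A)` is the focused sequent `⊢ Ω, [A]`. -/
inductive FDer : Multiset Fm → Option Fm → Prop
  | finit {Θ : Multiset Fm} (p : ℕ) :
      (∀ F ∈ Θ, ∃ B, F = Fm.qm Lbl.inf B) →
      FDer (Fm.natom p ::ₘ Θ) (some (Fm.atom p))
  | ftens {Θ Ω₁ Ω₂ : Multiset Fm} {B C : Fm} :
      (∀ F ∈ Θ, ∃ A, F = Fm.qm Lbl.inf A) →
      (∀ F ∈ Ω₁, F.isNeutral) → (∀ F ∈ Ω₂, F.isNeutral) →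
      FDer (Θ + Ω₁) (some B) → FDer (Θ + Ω₂) (some C) →
      FDer (Θ + Ω₁ + Ω₂) (some (Fm.tens B C))
  | fone {Θ : Multiset Fm} :
      (∀ F ∈ Θ, ∃ B, F = Fm.qm Lbl.inf B) → FDer Θ (some Fm.one)
  | fbang {Γ Δ : Multiset Fm} {u : Lbl} {C : Fm} :
      (∀ F ∈ Γ, ∃ v B, F = Fm.qm v B ∧ Lbl.le u v) →
      (∀ F ∈ Δ, ∃ B, F = Fm.qm Lbl.inf B) →
      FDer (C ::ₘ Γ) none → FDer (Γ + Δ) (some (Fm.bang u C))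
  | blur {Ω : Multiset Fm} {N : Fm} :
      N.isNeg → (∀ F ∈ Ω, F.isNeutral) →
      FDer (N ::ₘ Ω) none → FDer Ω (some N)
  | par {Γ : Multiset Fm} {A B : Fm} :
      FDer (A ::ₘ B ::ₘ Γ) none → FDer (Fm.par A B ::ₘ Γ) none
  | bot {Γ : Multiset Fm} : FDer Γ none → FDer (Fm.bot ::ₘ Γ) none
  | decide {Ω : Multiset Fm} {P : Fm} :
      P.isPos → (∀ F ∈ Ω, F.isNeutral) →
      FDer Ω (some P) → FDer (P ::ₘ Ω) none
  | ldecide {Ω : Multiset Fm} {u : Lbl} {A : Fm} :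
      u ≠ Lbl.inf → (∀ F ∈ Ω, F.isNeutral) →
      FDer Ω (some A) → FDer (Fm.qm u A ::ₘ Ω) none
  | udecide {Ω : Multiset Fm} {A : Fm} :
      (∀ F ∈ Ω, F.isNeutral) →
      FDer (Fm.qm Lbl.inf A ::ₘ Ω) (some A) →
      FDer (Fm.qm Lbl.inf A ::ₘ Ω) none

/-! ## Two-register Minsky machines -/

/-- The instruction set of a two-register Minsky machine. -/
inductive Instr : Type
  | halt | incra | incrb | decra | decrb | isza | iszb
deriving DecidableEq

/-- A configuration `⟨q, v⟩`: a state (states are names by natural numbers,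
with `0` the distinguished halting state `*`) together with the values
`v(a)` and `v(b)` of the two registers. -/
structure Cfg : Type where
  q : ℕ
  a : ℕ
  b : ℕ
deriving DecidableEq

/-- A two-register Minsky machine is presented by its finite labelled transition
table: a finite list of (source state, instruction, target state) triples. -/
abbrev Prog : Type := List (ℕ × Instr × ℕ)

/-- The labelled transition relation between configurations generated by the
table `P`, following the seven schemas (the halting state is `0`). -/
inductive Step (P : Prog) : Cfg → Instr → Cfg → Prop
  | halt {q m n : ℕ} : (q, Instr.halt, 0) ∈ P → q ≠ 0 →
      Step P ⟨q, m, n⟩ Instr.halt ⟨0, 0, 0⟩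
  | incra {q r m n : ℕ} : (q, Instr.incra, r) ∈ P → q ≠ r →
      Step P ⟨q, m, n⟩ Instr.incra ⟨r, m + 1, n⟩
  | incrb {q r m n : ℕ} : (q, Instr.incrb, r) ∈ P → q ≠ r →
      Step P ⟨q, m, n⟩ Instr.incrb ⟨r, m, n + 1⟩
  | decra {q r m n : ℕ} : (q, Instr.decra, r) ∈ P → q ≠ r →
      Step P ⟨q, m + 1, n⟩ Instr.decra ⟨r, m, n⟩
  | decrb {q r m n : ℕ} : (q, Instr.decrb, r) ∈ P → q ≠ r →
      Step P ⟨q, m, n + 1⟩ Instr.decrb ⟨r, m, n⟩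
  | isza {q r n : ℕ} : (q, Instr.isza, r) ∈ P → q ≠ r →
      Step P ⟨q, 0, n⟩ Instr.isza ⟨r, 0, n⟩
  | iszb {q r m : ℕ} : (q, Instr.iszb, r) ∈ P → q ≠ r →
      Step P ⟨q, m, 0⟩ Instr.iszb ⟨r, m, 0⟩

/-- The transition relation is deterministic. -/
def Deterministic (P : Prog) : Prop :=
  ∀ {c : Cfg} {i₁ i₂ : Instr} {d₁ d₂ : Cfg},
    Step P c i₁ d₁ → Step P c i₂ d₂ → i₁ = i₂ ∧ d₁ = d₂

/-- Every entry of the table generates transitions fitting one of the seven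
schemas: halt entries target the halting state `0` and have non-halting source,
and the other entries have distinct source and target states. -/
def WellFormed (P : Prog) : Prop :=
  ∀ e ∈ P, (e.2.1 = Instr.halt → e.2.2 = 0 ∧ e.1 ≠ 0) ∧
           (e.2.1 ≠ Instr.halt → e.1 ≠ e.2.2)

/-- The machine halts from `c₀` if some finite sequence of transitions leads
from `c₀` to the halting configuration `⟨*, {a:0, b:0}⟩`. -/
def Halts (P : Prog) (c₀ : Cfg) : Prop :=
  Relation.ReflTransGen (fun c d => ∃ i, Step P c i d) c₀ ⟨0, 0, 0⟩

/-! ## The encoding -/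

/-- The atom `r_a`. -/
def raA : Fm := Fm.atom 0
/-- The atom `r_b`. -/
def rbA : Fm := Fm.atom 1
/-- The atom `h`. -/
def hA : Fm := Fm.atom 2
/-- The negated atom `¬r_a`. -/
def nRa : Fm := Fm.natom 0
/-- The negated atom `¬r_b`. -/
def nRb : Fm := Fm.natom 1
/-- The negated atom `¬h`. -/
def nH : Fm := Fm.natom 2
/-- The atom for state `q` (distinct from `r_a`, `r_b`, `h`). -/
def stA (q : ℕ) : Fm := Fm.atom (q + 3)
/-- The negated atom `¬q` for state `q`. -/
def nSt (q : ℕ) : Fm := Fm.natom (q + 3)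
/-- The formula `?^a ¬r_a`. -/
def qa : Fm := Fm.qm Lbl.la nRa
/-- The formula `?^b ¬r_b`. -/
def qb : Fm := Fm.qm Lbl.lb nRb

/-- The formulas encoding one entry of the transition table. -/
def encInstr : ℕ × Instr × ℕ → Multiset Fm
  | (q, Instr.halt, _) =>
      {Fm.tens (stA q) nH,
       Fm.tens (Fm.tens hA (Fm.bang Lbl.la raA)) nH,
       Fm.tens (Fm.tens hA (Fm.bang Lbl.lb rbA)) nH,
       Fm.tens hA (Fm.bang Lbl.inf Fm.one)}
  | (q, Instr.incra, r) => {Fm.tens (stA q) (Fm.par (nSt r) qa)}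
  | (q, Instr.incrb, r) => {Fm.tens (stA q) (Fm.par (nSt r) qb)}
  | (q, Instr.decra, r) => {Fm.tens (Fm.tens (stA q) (Fm.bang Lbl.la raA)) (nSt r)}
  | (q, Instr.decrb, r) => {Fm.tens (Fm.tens (stA q) (Fm.bang Lbl.lb rbA)) (nSt r)}
  | (q, Instr.isza, r) => {Fm.tens (stA q) (Fm.bang Lbl.lb (nSt r))}
  | (q, Instr.iszb, r) => {Fm.tens (stA q) (Fm.bang Lbl.la (nSt r))}

/-- The context `Π` encoding the transition relation of the machine `P`. -/
def PiCtx (P : Prog) : Multiset Fm := (P.map encInstr).sum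

/-- `?^∞ Γ`: each element of `Γ` prefixed by `?^∞`. -/
def qmInf (Γ : Multiset Fm) : Multiset Fm := Γ.map (Fm.qm Lbl.inf)

/-- The encoding `⟨c⟩` of a configuration: `v(a)` copies of `?^a ¬r_a`,
`v(b)` copies of `?^b ¬r_b`, and `¬q`. -/
def encCfg (c : Cfg) : Multiset Fm :=
  Multiset.replicate c.a qa + Multiset.replicate c.b qb + {nSt c.q}

/-- The sequent `⊢ ?^∞Π, ⟨c⟩` encoding the halting problem from `c`. -/
def encSeq (P : Prog) (c : Cfg) : Multiset Fm := qmInf (PiCtx P) + encCfg c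

/-! ## Concrete Gödel encodings -/

/-- Gödel code of a label. -/
def Lbl.code : Lbl → ℕ
  | .inf => 0 | .la => 1 | .lb => 2

/-- A concrete (effective) Gödel encoding of formulas. -/
def Fm.code : Fm → ℕ
  | .atom p => Nat.pair 0 p
  | .natom p => Nat.pair 1 p
  | .tens A B => Nat.pair 2 (Nat.pair A.code B.code)
  | .one => Nat.pair 3 0
  | .par A B => Nat.pair 4 (Nat.pair A.code B.code)
  | .bot => Nat.pair 5 0
  | .bang u A => Nat.pair 6 (Nat.pair u.code A.code)
  | .qm u A => Nat.pair 7 (Nat.pair u.code A.code)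

/-- Gödel code of a list of natural numbers. -/
def codeList : List ℕ → ℕ
  | [] => 0
  | x :: l => Nat.pair x (codeList l) + 1

/-- A concrete (effective) Gödel encoding of finite multisets of formulas
(a sequent is coded by the sorted list of the codes of its elements). -/
def codeSeq (Γ : Multiset Fm) : ℕ :=
  codeList ((Γ.map Fm.code).sort (· ≤ ·))

/-- Gödel code of an instruction. -/
def Instr.code : Instr → ℕ
  | .halt => 0 | .incra => 1 | .incrb => 2 | .decra => 3
  | .decrb => 4 | .isza => 5 | .iszb => 6

/-- A concrete (effective) Gödel encoding of machines. -/
def codeProg (P : Prog) : ℕ :=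
  codeList (P.map fun e => Nat.pair e.1 (Nat.pair e.2.1.code e.2.2))

/-- A concrete (effective) Gödel encoding of configurations. -/
def codeCfg (c : Cfg) : ℕ := Nat.pair c.q (Nat.pair c.a c.b)


/-! ## Phase-semantics soundness machinery -/

section Adequacy

open Multiset

/-- Phase monoid: multisets of tokens. -/
abbrev Pt : Type := Multiset ℕ

/-- `k` copies of the register-a token `5`. -/
def rp5 (k : ℕ) : Pt := Multiset.replicate k 5
/-- `l` copies of the register-b token `6`. -/
def rp6 (l : ℕ) : Pt := Multiset.replicate l 6

/-- The pole. -/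
def pole (P : Prog) : Set Pt :=
  { m | m = {0} ∨ (∃ k, m = rp5 k + {1}) ∨ m = {5} + {2} ∨
        (∃ l, m = rp6 l + {3}) ∨ m = {6} + {4} ∨
        (∃ k l, m = rp5 k + rp6 l + {7}) ∨
        (∃ q k l, Halts P ⟨q, k, l⟩ ∧ m = rp5 k + rp6 l + {q + 8}) }

/-- Orthogonal w.r.t. the pole. -/
def dd (P : Prog) (X : Set Pt) : Set Pt := {m | ∀ x ∈ X, m + x ∈ pole P}

lemma mem_dd {P : Prog} {X : Set Pt} {m : Pt} :
    m ∈ dd P X ↔ ∀ x ∈ X, m + x ∈ pole P := Iff.rfl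

lemma sub_ddd {P : Prog} {X : Set Pt} {x : Pt} (hx : x ∈ X) : x ∈ dd P (dd P X) := by
  intro y hy
  rw [add_comm]
  exact hy x hx

lemma dd_anti {P : Prog} {X Y : Set Pt} (h : X ⊆ Y) : dd P Y ⊆ dd P X :=
  fun m hm x hx => hm x (h hx)

lemma pole_of_ddd {P : Prog} {X : Set Pt} (h : X ⊆ pole P) : dd P (dd P X) ⊆ pole P := by
  intro x hx
  have h0 : (0 : Pt) ∈ dd P X := fun f hf => by simpa using h hf
  simpa using hx 0 h0

/-- Pointwise sum of sets. -/
def mset (X Y : Set Pt) : Set Pt := {m | ∃ x ∈ X, ∃ y ∈ Y, m = x + y}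

lemma dd_add {P : Prog} {X Y : Set Pt} {x y : Pt}
    (hx : x ∈ dd P (dd P X)) (hy : y ∈ dd P (dd P Y)) :
    x + y ∈ dd P (dd P (mset X Y)) := by
  intro w hw
  have c1 : w + y ∈ dd P X := by
    intro a ha
    have c2 : w + a ∈ dd P Y := by
      intro b hb
      have := hw (a + b) ⟨a, ha, b, hb, rfl⟩
      rwa [show w + (a + b) = w + a + b by abel] at this
    have := hy (w + a) c2
    rwa [show y + (w + a) = w + y + a by abel] at this
  have := hx (w + y) c1
  rwa [show x + (w + y) = x + y + w by abel] at this

end Adequacy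
section Adequacy2

/-- The submonoid of allowed `!`-contexts for each label. -/
def Ifam : Lbl → Set Pt
  | .inf => {0}
  | .la => {m | ∃ k, m = rp5 k}
  | .lb => {m | ∃ l, m = rp6 l}

lemma Ifam_zero (u : Lbl) : (0 : Pt) ∈ Ifam u := by
  cases u
  · exact rfl
  · exact ⟨0, rfl⟩
  · exact ⟨0, rfl⟩

lemma Ifam_add {u : Lbl} {x y : Pt} (hx : x ∈ Ifam u) (hy : y ∈ Ifam u) :
    x + y ∈ Ifam u := by
  cases u
  · simp only [Ifam, Set.mem_singleton_iff] at *
    simp [hx, hy]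
  · obtain ⟨k, rfl⟩ := hx; obtain ⟨k', rfl⟩ := hy
    exact ⟨k + k', by simp [rp5, Multiset.replicate_add]⟩
  · obtain ⟨k, rfl⟩ := hx; obtain ⟨k', rfl⟩ := hy
    exact ⟨k + k', by simp [rp6, Multiset.replicate_add]⟩

lemma Ifam_le {u v : Lbl} (h : Lbl.le u v) : Ifam v ⊆ Ifam u := by
  rcases h with rfl | rfl
  · exact fun x hx => hx
  · intro x hx
    simp only [Ifam, Set.mem_singleton_iff] at hx
    subst hx
    exact Ifam_zero u

lemma Ifam_sum {u : Lbl} (S : Multiset Pt) (h : ∀ x ∈ S, x ∈ Ifam u) : S.sum ∈ Ifam u := by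
  induction S using Multiset.induction_on with
  | empty => simpa using Ifam_zero u
  | cons a s ih =>
      rw [Multiset.sum_cons]
      exact Ifam_add (h a (Multiset.mem_cons_self a s))
        (ih fun x hx => h x (Multiset.mem_cons_of_mem hx))

/-! ### Pole membership and inversion -/

lemma mem_pole_h (P : Prog) (k l : ℕ) : rp5 k + rp6 l + {7} ∈ pole P :=
  Or.inr (Or.inr (Or.inr (Or.inr (Or.inr (Or.inl ⟨k, l, rfl⟩)))))

lemma mem_pole_state {P : Prog} {q k l : ℕ} (h : Halts P ⟨q, k, l⟩) :
    rp5 k + rp6 l + {q + 8} ∈ pole P :=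
  Or.inr (Or.inr (Or.inr (Or.inr (Or.inr (Or.inr ⟨q, k, l, h, rfl⟩)))))

lemma inv0 {P : Prog} {x : Pt} (h : x + {0} ∈ pole P) : x = 0 := by
  rcases h with h | ⟨k, h⟩ | h | ⟨l, h⟩ | h | ⟨k, l, h⟩ | ⟨q, k, l, _, h⟩
  · have hc := congrArg Multiset.card h
    simp at hc
    simpa using hc
  all_goals (
    have hc := congrArg (Multiset.count 0) h
    simp [rp5, rp6, Multiset.count_replicate, Multiset.count_singleton,
      Multiset.count_add] at hc
    try omega)

end Adequacy2
section Adequacy3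

lemma inv1 {P : Prog} {x : Pt} (h : x + {1} ∈ pole P) : ∃ k, x = rp5 k := by
  rcases h with h | ⟨k, h⟩ | h | ⟨l, h⟩ | h | ⟨k, l, h⟩ | ⟨q', k, l, hH, h⟩
  · exfalso
    have hc := congrArg (Multiset.count 1) h
    simp [rp5, rp6, Multiset.count_replicate, Multiset.count_singleton] at hc
    try (split_ifs at hc <;> omega)
    try omega
  · exact ⟨k, add_right_cancel h⟩
  · exfalso
    have hc := congrArg (Multiset.count 1) h
    simp [rp5, rp6, Multiset.count_replicate, Multiset.count_singleton] at hc
    try (split_ifs at hc <;> omega)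
    try omega
  · exfalso
    have hc := congrArg (Multiset.count 1) h
    simp [rp5, rp6, Multiset.count_replicate, Multiset.count_singleton] at hc
    try (split_ifs at hc <;> omega)
    try omega
  · exfalso
    have hc := congrArg (Multiset.count 1) h
    simp [rp5, rp6, Multiset.count_replicate, Multiset.count_singleton] at hc
    try (split_ifs at hc <;> omega)
    try omega
  · exfalso
    have hc := congrArg (Multiset.count 1) h
    simp [rp5, rp6, Multiset.count_replicate, Multiset.count_singleton] at hc
    try (split_ifs at hc <;> omega)
    try omega
  · exfalso
    have hc := congrArg (Multiset.count 1) h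
    simp [rp5, rp6, Multiset.count_replicate, Multiset.count_singleton] at hc
    try (split_ifs at hc <;> omega)
    try omega

lemma inv2 {P : Prog} {x : Pt} (h : x + {2} ∈ pole P) : x = {5} := by
  rcases h with h | ⟨k, h⟩ | h | ⟨l, h⟩ | h | ⟨k, l, h⟩ | ⟨q', k, l, hH, h⟩
  · exfalso
    have hc := congrArg (Multiset.count 2) h
    simp [rp5, rp6, Multiset.count_replicate, Multiset.count_singleton] at hc
    try (split_ifs at hc <;> omega)
    try omega
  · exfalso
    have hc := congrArg (Multiset.count 2) h
    simp [rp5, rp6, Multiset.count_replicate, Multiset.count_singleton] at hc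
    try (split_ifs at hc <;> omega)
    try omega
  · exact add_right_cancel h
  · exfalso
    have hc := congrArg (Multiset.count 2) h
    simp [rp5, rp6, Multiset.count_replicate, Multiset.count_singleton] at hc
    try (split_ifs at hc <;> omega)
    try omega
  · exfalso
    have hc := congrArg (Multiset.count 2) h
    simp [rp5, rp6, Multiset.count_replicate, Multiset.count_singleton] at hc
    try (split_ifs at hc <;> omega)
    try omega
  · exfalso
    have hc := congrArg (Multiset.count 2) h
    simp [rp5, rp6, Multiset.count_replicate, Multiset.count_singleton] at hc
    try (split_ifs at hc <;> omega)
    try omega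
  · exfalso
    have hc := congrArg (Multiset.count 2) h
    simp [rp5, rp6, Multiset.count_replicate, Multiset.count_singleton] at hc
    try (split_ifs at hc <;> omega)
    try omega

lemma inv3 {P : Prog} {x : Pt} (h : x + {3} ∈ pole P) : ∃ l, x = rp6 l := by
  rcases h with h | ⟨k, h⟩ | h | ⟨l, h⟩ | h | ⟨k, l, h⟩ | ⟨q', k, l, hH, h⟩
  · exfalso
    have hc := congrArg (Multiset.count 3) h
    simp [rp5, rp6, Multiset.count_replicate, Multiset.count_singleton] at hc
    try (split_ifs at hc <;> omega)
    try omega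
  · exfalso
    have hc := congrArg (Multiset.count 3) h
    simp [rp5, rp6, Multiset.count_replicate, Multiset.count_singleton] at hc
    try (split_ifs at hc <;> omega)
    try omega
  · exfalso
    have hc := congrArg (Multiset.count 3) h
    simp [rp5, rp6, Multiset.count_replicate, Multiset.count_singleton] at hc
    try (split_ifs at hc <;> omega)
    try omega
  · exact ⟨l, add_right_cancel h⟩
  · exfalso
    have hc := congrArg (Multiset.count 3) h
    simp [rp5, rp6, Multiset.count_replicate, Multiset.count_singleton] at hc
    try (split_ifs at hc <;> omega)
    try omega
  · exfalso
    have hc := congrArg (Multiset.count 3) h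
    simp [rp5, rp6, Multiset.count_replicate, Multiset.count_singleton] at hc
    try (split_ifs at hc <;> omega)
    try omega
  · exfalso
    have hc := congrArg (Multiset.count 3) h
    simp [rp5, rp6, Multiset.count_replicate, Multiset.count_singleton] at hc
    try (split_ifs at hc <;> omega)
    try omega

lemma inv4 {P : Prog} {x : Pt} (h : x + {4} ∈ pole P) : x = {6} := by
  rcases h with h | ⟨k, h⟩ | h | ⟨l, h⟩ | h | ⟨k, l, h⟩ | ⟨q', k, l, hH, h⟩
  · exfalso
    have hc := congrArg (Multiset.count 4) h
    simp [rp5, rp6, Multiset.count_replicate, Multiset.count_singleton] at hc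
    try (split_ifs at hc <;> omega)
    try omega
  · exfalso
    have hc := congrArg (Multiset.count 4) h
    simp [rp5, rp6, Multiset.count_replicate, Multiset.count_singleton] at hc
    try (split_ifs at hc <;> omega)
    try omega
  · exfalso
    have hc := congrArg (Multiset.count 4) h
    simp [rp5, rp6, Multiset.count_replicate, Multiset.count_singleton] at hc
    try (split_ifs at hc <;> omega)
    try omega
  · exfalso
    have hc := congrArg (Multiset.count 4) h
    simp [rp5, rp6, Multiset.count_replicate, Multiset.count_singleton] at hc
    try (split_ifs at hc <;> omega)
    try omega
  · exact add_right_cancel h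
  · exfalso
    have hc := congrArg (Multiset.count 4) h
    simp [rp5, rp6, Multiset.count_replicate, Multiset.count_singleton] at hc
    try (split_ifs at hc <;> omega)
    try omega
  · exfalso
    have hc := congrArg (Multiset.count 4) h
    simp [rp5, rp6, Multiset.count_replicate, Multiset.count_singleton] at hc
    try (split_ifs at hc <;> omega)
    try omega

lemma invh {P : Prog} {x : Pt} (h : x + {7} ∈ pole P) : ∃ k l, x = rp5 k + rp6 l := by
  rcases h with h | ⟨k, h⟩ | h | ⟨l, h⟩ | h | ⟨k, l, h⟩ | ⟨q', k, l, hH, h⟩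
  · exfalso
    have hc := congrArg (Multiset.count 7) h
    simp [rp5, rp6, Multiset.count_replicate, Multiset.count_singleton] at hc
    try (split_ifs at hc <;> omega)
    try omega
  · exfalso
    have hc := congrArg (Multiset.count 7) h
    simp [rp5, rp6, Multiset.count_replicate, Multiset.count_singleton] at hc
    try (split_ifs at hc <;> omega)
    try omega
  · exfalso
    have hc := congrArg (Multiset.count 7) h
    simp [rp5, rp6, Multiset.count_replicate, Multiset.count_singleton] at hc
    try (split_ifs at hc <;> omega)
    try omega
  · exfalso
    have hc := congrArg (Multiset.count 7) h
    simp [rp5, rp6, Multiset.count_replicate, Multiset.count_singleton] at hc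
    try (split_ifs at hc <;> omega)
    try omega
  · exfalso
    have hc := congrArg (Multiset.count 7) h
    simp [rp5, rp6, Multiset.count_replicate, Multiset.count_singleton] at hc
    try (split_ifs at hc <;> omega)
    try omega
  · exact ⟨k, l, add_right_cancel h⟩
  · exfalso
    have hc := congrArg (Multiset.count 7) h
    simp [rp5, rp6, Multiset.count_replicate, Multiset.count_singleton] at hc
    try (split_ifs at hc <;> omega)
    try omega

lemma invst {P : Prog} {q : ℕ} {x : Pt} (h : x + {q + 8} ∈ pole P) :
    ∃ k l, x = rp5 k + rp6 l ∧ Halts P ⟨q, k, l⟩ := by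
  rcases h with h | ⟨k, h⟩ | h | ⟨l, h⟩ | h | ⟨k, l, h⟩ | ⟨q', k, l, hH, h⟩
  · exfalso
    have hc := congrArg (Multiset.count (q + 8)) h
    simp [rp5, rp6, Multiset.count_replicate, Multiset.count_singleton] at hc
    try (split_ifs at hc <;> omega)
    try omega
  · exfalso
    have hc := congrArg (Multiset.count (q + 8)) h
    simp [rp5, rp6, Multiset.count_replicate, Multiset.count_singleton] at hc
    try (split_ifs at hc <;> omega)
    try omega
  · exfalso
    have hc := congrArg (Multiset.count (q + 8)) h
    simp [rp5, rp6, Multiset.count_replicate, Multiset.count_singleton] at hc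
    try (split_ifs at hc <;> omega)
    try omega
  · exfalso
    have hc := congrArg (Multiset.count (q + 8)) h
    simp [rp5, rp6, Multiset.count_replicate, Multiset.count_singleton] at hc
    try (split_ifs at hc <;> omega)
    try omega
  · exfalso
    have hc := congrArg (Multiset.count (q + 8)) h
    simp [rp5, rp6, Multiset.count_replicate, Multiset.count_singleton] at hc
    try (split_ifs at hc <;> omega)
    try omega
  · exfalso
    have hc := congrArg (Multiset.count (q + 8)) h
    simp [rp5, rp6, Multiset.count_replicate, Multiset.count_singleton] at hc
    try (split_ifs at hc <;> omega)
    try omega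
  · by_cases hqq : q' = q
    · subst hqq
      exact ⟨k, l, add_right_cancel h, hH⟩
    · exfalso
      have hc := congrArg (Multiset.count (q + 8)) h
      simp [rp5, rp6, Multiset.count_replicate, Multiset.count_singleton] at hc
      try (split_ifs at hc <;> omega)
      try omega

lemma dd_pole {P : Prog} {x : Pt} (hx : x ∈ dd P (pole P)) : x = 0 :=
  inv0 (hx {0} (Or.inl rfl))

end Adequacy3
section Adequacy4

/-- Interpretation of formulas. -/
def itp (P : Prog) : Fm → Set Pt
  | .atom p => {({p + 5} : Pt)}
  | .natom p => dd P {({p + 5} : Pt)}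
  | .tens A B => mset (dd P (dd P (itp P A))) (dd P (dd P (itp P B)))
  | .one => {0}
  | .par A B => dd P (mset (dd P (itp P A)) (dd P (itp P B)))
  | .bot => pole P
  | .bang u A => dd P (dd P (itp P A)) ∩ Ifam u
  | .qm u A => dd P (dd P (itp P A) ∩ Ifam u)

/-- `Sums P Γ m`: `m` is a sum of elements dual to the formulas of `Γ`. -/
def Sums (P : Prog) (Γ : Multiset Fm) (m : Pt) : Prop :=
  ∃ Δ : Multiset (Fm × Pt), Δ.map Prod.fst = Γ ∧
    (∀ p ∈ Δ, p.2 ∈ dd P (itp P p.1)) ∧ (Δ.map Prod.snd).sum = m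

lemma sums_zero {P : Prog} {m : Pt} : Sums P 0 m ↔ m = 0 := by
  constructor
  · rintro ⟨Δ, hf, _, rfl⟩
    rw [Multiset.map_eq_zero] at hf
    simp [hf]
  · rintro rfl
    exact ⟨0, by simp, by simp, by simp⟩

lemma sums_cons {P : Prog} {A : Fm} {Γ : Multiset Fm} {m : Pt} :
    Sums P (A ::ₘ Γ) m ↔
      ∃ x ∈ dd P (itp P A), ∃ m', Sums P Γ m' ∧ m = x + m' := by
  constructor
  · rintro ⟨Δ, hf, hdl, rfl⟩
    obtain ⟨p, hp, hp1, hpe⟩ := (Multiset.map_eq_cons Prod.fst Δ Γ A).mpr hf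
    refine ⟨p.2, ?_, ((Δ.erase p).map Prod.snd).sum,
      ⟨Δ.erase p, hpe, fun q hq => hdl q (Multiset.mem_of_mem_erase hq), rfl⟩, ?_⟩
    · have := hdl p hp
      rwa [hp1] at this
    · conv_lhs => rw [← Multiset.cons_erase hp]
      rw [Multiset.map_cons, Multiset.sum_cons]
  · rintro ⟨x, hx, m', ⟨Δ, hf, hdl, rfl⟩, rfl⟩
    refine ⟨(A, x) ::ₘ Δ, by simp [hf], ?_, by simp⟩
    rintro q hq
    rcases Multiset.mem_cons.mp hq with rfl | hq'
    · exact hx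
    · exact hdl _ hq'

lemma sums_add {P : Prog} {Γ₁ Γ₂ : Multiset Fm} {m : Pt} :
    Sums P (Γ₁ + Γ₂) m ↔
      ∃ m₁ m₂, Sums P Γ₁ m₁ ∧ Sums P Γ₂ m₂ ∧ m = m₁ + m₂ := by
  induction Γ₁ using Multiset.induction_on generalizing m with
  | empty =>
      rw [zero_add]
      constructor
      · intro h
        exact ⟨0, m, sums_zero.mpr rfl, h, (zero_add m).symm⟩
      · rintro ⟨m₁, m₂, h1, h2, rfl⟩
        rw [sums_zero] at h1
        subst h1
        rwa [zero_add]
  | cons A Γ ih =>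
      rw [Multiset.cons_add, sums_cons]
      constructor
      · rintro ⟨x, hx, m', hm', rfl⟩
        obtain ⟨m₁, m₂, h1, h2, rfl⟩ := ih.mp hm'
        exact ⟨x + m₁, m₂, sums_cons.mpr ⟨x, hx, m₁, h1, rfl⟩, h2, by abel⟩
      · rintro ⟨m₁, m₂, h1, h2, rfl⟩
        obtain ⟨x, hx, m₁', h1', rfl⟩ := sums_cons.mp h1
        exact ⟨x, hx, m₁' + m₂, ih.mpr ⟨m₁', m₂, h1', h2, rfl⟩, by abel⟩

/-- Soundness of the sequent calculus w.r.t. the phase model. -/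
theorem sound {Γ : Multiset Fm} (P : Prog) (h : Der Γ) :
    ∀ m, Sums P Γ m → m ∈ pole P := by
  induction h with
  | init p =>
      intro m hm
      rw [show ({Fm.atom p, Fm.natom p} : Multiset Fm)
          = Fm.atom p ::ₘ Fm.natom p ::ₘ 0 from rfl, sums_cons] at hm
      obtain ⟨x, hx, m', hm', rfl⟩ := hm
      rw [sums_cons] at hm'
      obtain ⟨y, hy, m'', hm'', rfl⟩ := hm'
      rw [sums_zero] at hm''
      subst hm''
      have := hy x hx
      rwa [show x + (y + 0) = y + x by abel]
  | one =>
      intro m hm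
      rw [show ({Fm.one} : Multiset Fm) = Fm.one ::ₘ 0 from rfl, sums_cons] at hm
      obtain ⟨x, hx, m', hm', rfl⟩ := hm
      rw [sums_zero] at hm'
      subst hm'
      simpa using hx 0 rfl
  | @tens Γ Δ A B _ _ ih1 ih2 =>
      intro m hm
      rw [sums_cons] at hm
      obtain ⟨x, hx, m', hm', rfl⟩ := hm
      obtain ⟨g₁, g₂, h1, h2, rfl⟩ := sums_add.mp hm'
      have hg1 : g₁ ∈ dd P (dd P (itp P A)) := by
        intro a ha
        have := ih1 (a + g₁) (sums_cons.mpr ⟨a, ha, g₁, h1, rfl⟩)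
        rwa [add_comm] at this
      have hg2 : g₂ ∈ dd P (dd P (itp P B)) := by
        intro b hb
        have := ih2 (b + g₂) (sums_cons.mpr ⟨b, hb, g₂, h2, rfl⟩)
        rwa [add_comm] at this
      exact hx (g₁ + g₂) ⟨g₁, hg1, g₂, hg2, rfl⟩
  | @par Γ A B _ ih =>
      intro m hm
      rw [sums_cons] at hm
      obtain ⟨x, hx, g, hg, rfl⟩ := hm
      refine hx g ?_
      rintro z ⟨a, ha, b, hb, rfl⟩
      have := ih (a + (b + g)) (sums_cons.mpr ⟨a, ha, b + g,
        sums_cons.mpr ⟨b, hb, g, hg, rfl⟩, rfl⟩)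
      rwa [show a + (b + g) = g + (a + b) by abel] at this
  | @bot Γ _ ih =>
      intro m hm
      rw [sums_cons] at hm
      obtain ⟨x, hx, g, hg, rfl⟩ := hm
      exact hx g (ih g hg)
  | @qm Γ A u _ ih =>
      intro m hm
      rw [sums_cons] at hm
      obtain ⟨x, hx, g, hg, rfl⟩ := hm
      refine hx g ?_
      rintro t ⟨ht, _⟩
      have := ih (t + g) (sums_cons.mpr ⟨t, ht, g, hg, rfl⟩)
      rwa [add_comm] at this
  | @bang Γ C u hside _ ih =>
      intro m hm
      rw [sums_cons] at hm
      obtain ⟨x, hx, g, hg, rfl⟩ := hm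
      refine hx g ⟨?_, ?_⟩
      · intro c hc
        have := ih (c + g) (sums_cons.mpr ⟨c, hc, g, hg, rfl⟩)
        rwa [add_comm] at this
      · obtain ⟨Δ, hf, hdl, rfl⟩ := hg
        refine Ifam_sum _ ?_
        intro y hy
        obtain ⟨p, hp, rfl⟩ := Multiset.mem_map.mp hy
        have hmem : p.1 ∈ Γ := hf ▸ Multiset.mem_map_of_mem Prod.fst hp
        obtain ⟨v, B, hqB, huv⟩ := hside p.1 hmem
        have := hdl p hp
        rw [hqB] at this
        have hIv : p.2 ∈ Ifam v := by
          cases v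
          · -- v = inf
            have hsub : pole P ⊆ dd P (dd P (itp P B) ∩ Ifam Lbl.inf) := by
              intro w hw t ⟨_, ht2⟩
              have : t = 0 := ht2
              simpa [this] using hw
            have : p.2 ∈ dd P (pole P) := fun w hw => this w (hsub hw)
            rw [dd_pole this]
            exact Ifam_zero _
          · -- v = la
            have h1 : ({1} : Pt) ∈ dd P (dd P (itp P B) ∩ Ifam Lbl.la) := by
              rintro t ⟨_, k, rfl⟩
              rw [add_comm]
              exact Or.inr (Or.inl ⟨k, rfl⟩)
            obtain ⟨k, hk⟩ := inv1 (this {1} h1)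
            exact ⟨k, hk⟩
          · -- v = lb
            have h1 : ({3} : Pt) ∈ dd P (dd P (itp P B) ∩ Ifam Lbl.lb) := by
              rintro t ⟨_, l, rfl⟩
              rw [add_comm]
              exact Or.inr (Or.inr (Or.inr (Or.inl ⟨l, rfl⟩)))
            obtain ⟨l, hl⟩ := inv3 (this {3} h1)
            exact ⟨l, hl⟩
        exact Ifam_le huv hIv
  | @weak Γ A _ ih =>
      intro m hm
      rw [sums_cons] at hm
      obtain ⟨x, hx, g, hg, rfl⟩ := hm
      have hx0 : x = 0 := by
        refine dd_pole (fun w hw => hx w ?_)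
        rintro t ⟨_, ht2⟩
        have : t = 0 := ht2
        simpa [this] using hw
      rw [hx0, zero_add]
      exact ih g hg
  | @contr Γ A _ ih =>
      intro m hm
      rw [sums_cons] at hm
      obtain ⟨x, hx, g, hg, rfl⟩ := hm
      have hx0 : x = 0 := by
        refine dd_pole (fun w hw => hx w ?_)
        rintro t ⟨_, ht2⟩
        have : t = 0 := ht2
        simpa [this] using hw
      have := ih (x + (x + g)) (sums_cons.mpr ⟨x, hx, x + g,
        sums_cons.mpr ⟨x, hx, g, hg, rfl⟩, rfl⟩)
      subst hx0
      simpa using this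

end Adequacy4
section Adequacy5

lemma rp5_succ (k : ℕ) : rp5 (k + 1) = rp5 k + {5} := by
  rw [rp5, Multiset.replicate_succ, ← Multiset.singleton_add, add_comm]
  rfl

lemma rp6_succ (l : ℕ) : rp6 (l + 1) = rp6 l + {6} := by
  rw [rp6, Multiset.replicate_succ, ← Multiset.singleton_add, add_comm]
  rfl

lemma ra_exact {P : Prog} {v : Pt} (hv : v ∈ dd P (dd P ({({5} : Pt)} : Set Pt))) :
    v = {5} := by
  have h2 : ({2} : Pt) ∈ dd P ({({5} : Pt)} : Set Pt) := by
    intro t ht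
    rw [Set.mem_singleton_iff] at ht
    subst ht
    rw [add_comm]
    exact Or.inr (Or.inr (Or.inl rfl))
  exact inv2 (hv {2} h2)

lemma rb_exact {P : Prog} {v : Pt} (hv : v ∈ dd P (dd P ({({6} : Pt)} : Set Pt))) :
    v = {6} := by
  have h4 : ({4} : Pt) ∈ dd P ({({6} : Pt)} : Set Pt) := by
    intro t ht
    rw [Set.mem_singleton_iff] at ht
    subst ht
    rw [add_comm]
    exact Or.inr (Or.inr (Or.inr (Or.inr (Or.inl rfl))))
  exact inv4 (hv {4} h4)

lemma pole_of_mset_ddd {P : Prog} {X Y : Set Pt}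
    (h : ∀ x ∈ X, ∀ y ∈ Y, x + y ∈ pole P) :
    mset (dd P (dd P X)) (dd P (dd P Y)) ⊆ pole P := by
  rintro z ⟨x, hx, y, hy, rfl⟩
  refine pole_of_ddd ?_ (dd_add hx hy)
  rintro w ⟨a, ha, b, hb, rfl⟩
  exact h a ha b hb

lemma tens_pole {P : Prog} {A B : Fm}
    (h : ∀ x ∈ itp P A, ∀ y ∈ itp P B, x + y ∈ pole P) :
    itp P (Fm.tens A B) ⊆ pole P :=
  pole_of_mset_ddd h

lemma split5 {y : Pt} {k l : ℕ} (h : y + {5} = rp5 k + rp6 l) :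
    ∃ k', k = k' + 1 ∧ y = rp5 k' + rp6 l := by
  cases k with
  | zero =>
      exfalso
      have hc := congrArg (Multiset.count 5) h
      simp [rp5, rp6, Multiset.count_replicate] at hc
  | succ k' =>
      refine ⟨k', rfl, ?_⟩
      have he : rp5 (k' + 1) + rp6 l = (rp5 k' + rp6 l) + {5} := by
        rw [rp5_succ]; abel
      rw [he] at h
      exact add_right_cancel h

lemma split6 {y : Pt} {k l : ℕ} (h : y + {6} = rp5 k + rp6 l) :
    ∃ l', l = l' + 1 ∧ y = rp5 k + rp6 l' := by
  cases l with
  | zero =>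
      exfalso
      have hc := congrArg (Multiset.count 6) h
      simp [rp5, rp6, Multiset.count_replicate] at hc
  | succ l' =>
      refine ⟨l', rfl, ?_⟩
      have he : rp5 k + rp6 (l' + 1) = (rp5 k + rp6 l') + {6} := by
        rw [rp6_succ]; abel
      rw [he] at h
      exact add_right_cancel h

lemma sgl_nat (r : ℕ) : ({r + 3 + 5} : Pt) = {r + 8} := by
  rw [Nat.add_assoc]

/-- The key adequacy lemma: the interpretation of every formula encoding a
transition of the machine is contained in the pole. -/
lemma itp_instr (P : Prog) (hwf : WellFormed P) {e : ℕ × Instr × ℕ} (he : e ∈ P) :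
    ∀ F ∈ encInstr e, itp P F ⊆ pole P := by
  obtain ⟨q, i, r⟩ := e
  have hwfe := hwf _ he
  cases i <;> intro F hF <;> simp only [encInstr] at hF
  case halt =>
    obtain ⟨hr0, hq0⟩ := hwfe.1 rfl
    subst hr0
    have hF' : F = Fm.tens (stA q) nH ∨ F = Fm.tens (Fm.tens hA (Fm.bang Lbl.la raA)) nH ∨
        F = Fm.tens (Fm.tens hA (Fm.bang Lbl.lb rbA)) nH ∨
        F = Fm.tens hA (Fm.bang Lbl.inf Fm.one) := by
      rcases Multiset.mem_cons.mp hF with h | hF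
      · exact Or.inl h
      rcases Multiset.mem_cons.mp hF with h | hF
      · exact Or.inr (Or.inl h)
      rcases Multiset.mem_cons.mp hF with h | hF
      · exact Or.inr (Or.inr (Or.inl h))
      · exact Or.inr (Or.inr (Or.inr (Multiset.mem_singleton.mp hF)))
    rcases hF' with rfl | rfl | rfl | rfl
    · -- q ⊗ ¬h
      apply tens_pole
      intro x hx y hy
      simp only [stA, itp, Set.mem_singleton_iff] at hx
      rw [sgl_nat] at hx
      subst hx
      obtain ⟨k, l, rfl⟩ := invh (hy {7} rfl)
      have hH : Halts P ⟨q, k, l⟩ :=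
        Relation.ReflTransGen.head ⟨Instr.halt, Step.halt he hq0⟩ Relation.ReflTransGen.refl
      have hm := mem_pole_state hH
      rwa [show rp5 k + rp6 l + ({q + 8} : Pt) = {q + 8} + (rp5 k + rp6 l) from by abel] at hm
    · -- (h ⊗ !ᵃr_a) ⊗ ¬h
      apply tens_pole
      rintro x ⟨x₁, hx₁, x₂, hx₂, rfl⟩ y hy
      have hyS : y ∈ dd P (mset (itp P hA) (itp P (Fm.bang Lbl.la raA))) := by
        rintro t ⟨t₁, ht₁, t₂, ht₂, rfl⟩
        have e₁ : t₁ = {7} := ht₁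
        have e₂ : t₂ = {5} := ra_exact ht₂.1
        subst e₁; subst e₂
        obtain ⟨k, l, rfl⟩ := invh (hy {7} rfl)
        have hm := mem_pole_h P (k + 1) l
        rw [rp5_succ] at hm
        rwa [show rp5 k + {5} + rp6 l + ({7} : Pt)
            = rp5 k + rp6 l + ({7} + {5}) from by abel] at hm
      exact dd_add hx₁ hx₂ y hyS
    · -- (h ⊗ !ᵇr_b) ⊗ ¬h
      apply tens_pole
      rintro x ⟨x₁, hx₁, x₂, hx₂, rfl⟩ y hy
      have hyS : y ∈ dd P (mset (itp P hA) (itp P (Fm.bang Lbl.lb rbA))) := by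
        rintro t ⟨t₁, ht₁, t₂, ht₂, rfl⟩
        have e₁ : t₁ = {7} := ht₁
        have e₂ : t₂ = {6} := rb_exact ht₂.1
        subst e₁; subst e₂
        obtain ⟨k, l, rfl⟩ := invh (hy {7} rfl)
        have hm := mem_pole_h P k (l + 1)
        rw [rp6_succ] at hm
        rwa [show rp5 k + (rp6 l + {6}) + ({7} : Pt)
            = rp5 k + rp6 l + ({7} + {6}) from by abel] at hm
      exact dd_add hx₁ hx₂ y hyS
    · -- h ⊗ !^∞1
      apply tens_pole
      intro x hx y hy
      have e₁ : x = {7} := hx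
      have e₂ : y = 0 := hy.2
      subst e₁; subst e₂
      have hm := mem_pole_h P 0 0
      simpa [rp5, rp6] using hm
  case incra =>
    have hqr : q ≠ r := hwfe.2 (fun hh => Instr.noConfusion hh)
    rw [Multiset.mem_singleton] at hF
    subst hF
    apply tens_pole
    intro x hx y hy
    simp only [stA, itp, Set.mem_singleton_iff] at hx
    rw [sgl_nat] at hx
    subst hx
    have h1 : ({r + 8} : Pt) ∈ dd P (itp P (nSt r)) := by
      simp only [nSt, itp]
      rw [sgl_nat]
      exact sub_ddd rfl
    have h2 : ({5} : Pt) ∈ dd P (itp P qa) := by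
      simp only [qa, nRa, itp]
      refine sub_ddd ⟨sub_ddd rfl, 1, ?_⟩
      rw [rp5, Multiset.replicate_one]
    have h3 := hy ({r + 8} + {5}) ⟨{r + 8}, h1, {5}, h2, rfl⟩
    have h4 : (y + {5}) + ({r + 8} : Pt) ∈ pole P := by
      rwa [show (y + {5}) + ({r + 8} : Pt) = y + ({r + 8} + {5}) from by abel]
    obtain ⟨k, l, hyeq, hH⟩ := invst h4
    obtain ⟨k', rfl, rfl⟩ := split5 hyeq
    have hH' : Halts P ⟨q, k', l⟩ :=
      Relation.ReflTransGen.head ⟨Instr.incra, Step.incra he hqr⟩ hH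
    have hm := mem_pole_state hH'
    rwa [show rp5 k' + rp6 l + ({q + 8} : Pt)
        = {q + 8} + (rp5 k' + rp6 l) from by abel] at hm
  case incrb =>
    have hqr : q ≠ r := hwfe.2 (fun hh => Instr.noConfusion hh)
    rw [Multiset.mem_singleton] at hF
    subst hF
    apply tens_pole
    intro x hx y hy
    simp only [stA, itp, Set.mem_singleton_iff] at hx
    rw [sgl_nat] at hx
    subst hx
    have h1 : ({r + 8} : Pt) ∈ dd P (itp P (nSt r)) := by
      simp only [nSt, itp]
      rw [sgl_nat]
      exact sub_ddd rfl
    have h2 : ({6} : Pt) ∈ dd P (itp P qb) := by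
      simp only [qb, nRb, itp]
      refine sub_ddd ⟨sub_ddd rfl, 1, ?_⟩
      rw [rp6, Multiset.replicate_one]
    have h3 := hy ({r + 8} + {6}) ⟨{r + 8}, h1, {6}, h2, rfl⟩
    have h4 : (y + {6}) + ({r + 8} : Pt) ∈ pole P := by
      rwa [show (y + {6}) + ({r + 8} : Pt) = y + ({r + 8} + {6}) from by abel]
    obtain ⟨k, l, hyeq, hH⟩ := invst h4
    obtain ⟨l', rfl, rfl⟩ := split6 hyeq
    have hH' : Halts P ⟨q, k, l'⟩ :=
      Relation.ReflTransGen.head ⟨Instr.incrb, Step.incrb he hqr⟩ hH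
    have hm := mem_pole_state hH'
    rwa [show rp5 k + rp6 l' + ({q + 8} : Pt)
        = {q + 8} + (rp5 k + rp6 l') from by abel] at hm
  case decra =>
    have hqr : q ≠ r := hwfe.2 (fun hh => Instr.noConfusion hh)
    rw [Multiset.mem_singleton] at hF
    subst hF
    apply tens_pole
    rintro x ⟨x₁, hx₁, x₂, hx₂, rfl⟩ y hy
    have hyS : y ∈ dd P (mset (itp P (stA q)) (itp P (Fm.bang Lbl.la raA))) := by
      rintro t ⟨t₁, ht₁, t₂, ht₂, rfl⟩
      have e₁ : t₁ = {q + 8} := by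
        simp only [stA, itp, Set.mem_singleton_iff] at ht₁
        rw [sgl_nat] at ht₁
        exact ht₁
      have e₂ : t₂ = {5} := ra_exact ht₂.1
      subst e₁; subst e₂
      have h4 : y + ({r + 8} : Pt) ∈ pole P := hy {r + 8} (sgl_nat r).symm
      obtain ⟨k, l, rfl, hH⟩ := invst h4
      have hH' : Halts P ⟨q, k + 1, l⟩ :=
        Relation.ReflTransGen.head ⟨Instr.decra, Step.decra he hqr⟩ hH
      have hm := mem_pole_state hH'
      rw [rp5_succ] at hm
      rwa [show rp5 k + {5} + rp6 l + ({q + 8} : Pt)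
          = rp5 k + rp6 l + ({q + 8} + {5}) from by abel] at hm
    exact dd_add hx₁ hx₂ y hyS
  case decrb =>
    have hqr : q ≠ r := hwfe.2 (fun hh => Instr.noConfusion hh)
    rw [Multiset.mem_singleton] at hF
    subst hF
    apply tens_pole
    rintro x ⟨x₁, hx₁, x₂, hx₂, rfl⟩ y hy
    have hyS : y ∈ dd P (mset (itp P (stA q)) (itp P (Fm.bang Lbl.lb rbA))) := by
      rintro t ⟨t₁, ht₁, t₂, ht₂, rfl⟩
      have e₁ : t₁ = {q + 8} := by
        simp only [stA, itp, Set.mem_singleton_iff] at ht₁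
        rw [sgl_nat] at ht₁
        exact ht₁
      have e₂ : t₂ = {6} := rb_exact ht₂.1
      subst e₁; subst e₂
      have h4 : y + ({r + 8} : Pt) ∈ pole P := hy {r + 8} (sgl_nat r).symm
      obtain ⟨k, l, rfl, hH⟩ := invst h4
      have hH' : Halts P ⟨q, k, l + 1⟩ :=
        Relation.ReflTransGen.head ⟨Instr.decrb, Step.decrb he hqr⟩ hH
      have hm := mem_pole_state hH'
      rw [rp6_succ] at hm
      rwa [show rp5 k + (rp6 l + {6}) + ({q + 8} : Pt)
          = rp5 k + rp6 l + ({q + 8} + {6}) from by abel] at hm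
    exact dd_add hx₁ hx₂ y hyS
  case isza =>
    have hqr : q ≠ r := hwfe.2 (fun hh => Instr.noConfusion hh)
    rw [Multiset.mem_singleton] at hF
    subst hF
    apply tens_pole
    intro x hx y hy
    simp only [stA, itp, Set.mem_singleton_iff] at hx
    rw [sgl_nat] at hx
    subst hx
    obtain ⟨hy1, hy2⟩ := hy
    obtain ⟨l, rfl⟩ := hy2
    have h4 : rp6 l + ({r + 8} : Pt) ∈ pole P := by
      exact hy1 {r + 8} (sub_ddd (sgl_nat r).symm)
    obtain ⟨k, l', hyeq, hH⟩ := invst h4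
    have hk5 := congrArg (Multiset.count 5) hyeq
    have hl6 := congrArg (Multiset.count 6) hyeq
    simp [rp5, rp6, Multiset.count_replicate] at hk5 hl6
    subst hk5
    subst hl6
    have hH' : Halts P ⟨q, 0, l⟩ :=
      Relation.ReflTransGen.head ⟨Instr.isza, Step.isza he hqr⟩ hH
    have hm := mem_pole_state hH'
    rwa [show rp5 0 + rp6 l + ({q + 8} : Pt)
        = {q + 8} + rp6 l from by rw [show rp5 0 = (0 : Pt) from rfl]; abel] at hm
  case iszb =>
    have hqr : q ≠ r := hwfe.2 (fun hh => Instr.noConfusion hh)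
    rw [Multiset.mem_singleton] at hF
    subst hF
    apply tens_pole
    intro x hx y hy
    simp only [stA, itp, Set.mem_singleton_iff] at hx
    rw [sgl_nat] at hx
    subst hx
    obtain ⟨hy1, hy2⟩ := hy
    obtain ⟨k, rfl⟩ := hy2
    have h4 : rp5 k + ({r + 8} : Pt) ∈ pole P := by
      exact hy1 {r + 8} (sub_ddd (sgl_nat r).symm)
    obtain ⟨k', l', hyeq, hH⟩ := invst h4
    have hk5 := congrArg (Multiset.count 5) hyeq
    have hl6 := congrArg (Multiset.count 6) hyeq
    simp [rp5, rp6, Multiset.count_replicate] at hk5 hl6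
    subst hk5
    subst hl6
    have hH' : Halts P ⟨q, k, 0⟩ :=
      Relation.ReflTransGen.head ⟨Instr.iszb, Step.iszb he hqr⟩ hH
    have hm := mem_pole_state hH'
    rwa [show rp5 k + rp6 0 + ({q + 8} : Pt)
        = {q + 8} + rp5 k from by rw [show rp6 0 = (0 : Pt) from rfl]; abel] at hm

end Adequacy5
section Adequacy6

lemma mem_PiCtx {P : Prog} {F : Fm} (h : F ∈ PiCtx P) : ∃ e ∈ P, F ∈ encInstr e := by
  induction P with
  | nil => simp [PiCtx] at h
  | cons e P ih =>
      rw [PiCtx, List.map_cons, List.sum_cons] at h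
      rcases Multiset.mem_add.mp h with h' | h'
      · exact ⟨e, List.mem_cons_self, h'⟩
      · obtain ⟨e', he', hF⟩ := ih h'
        exact ⟨e', List.mem_cons_of_mem e he', hF⟩

end Adequacy6

theorem derivable_implies_halting' (M : Prog) (hwf : WellFormed M) (c₀ : Cfg)
    (h : Der (encSeq M c₀)) : Halts M c₀ := by
  classical
  have hpi : ∀ F ∈ PiCtx M, itp M F ⊆ pole M := by
    intro F hF
    obtain ⟨e, he, hFe⟩ := mem_PiCtx hF
    exact itp_instr M hwf he F hFe
  -- the witness choice of dual elements
  set Δ : Multiset (Fm × Pt) :=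
    (PiCtx M).map (fun F => (Fm.qm Lbl.inf F, (0 : Pt)))
      + (Multiset.replicate c₀.a (qa, ({5} : Pt))
        + Multiset.replicate c₀.b (qb, ({6} : Pt))
        + {(nSt c₀.q, ({c₀.q + 8} : Pt))}) with hΔ
  have hfst : Δ.map Prod.fst = encSeq M c₀ := by
    rw [hΔ]
    simp only [Multiset.map_add, Multiset.map_map, Multiset.map_replicate,
      Multiset.map_singleton, Function.comp]
    rfl
  have hdual : ∀ p ∈ Δ, p.2 ∈ dd M (itp M p.1) := by
    intro p hp
    rw [hΔ] at hp
    rcases Multiset.mem_add.mp hp with hp | hp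
    · obtain ⟨F, hF, rfl⟩ := Multiset.mem_map.mp hp
      -- 0 is dual to ?^∞F
      intro w hw
      have h0F : (0 : Pt) ∈ dd M (itp M F) := by
        intro f hf
        simpa using hpi F hF hf
      have := hw 0 ⟨h0F, rfl⟩
      simpa [add_comm] using this
    rcases Multiset.mem_add.mp hp with hp | hp
    rcases Multiset.mem_add.mp hp with hp | hp
    · have := Multiset.eq_of_mem_replicate hp
      subst this
      -- {5} is dual to ?^a ¬r_a
      show ({5} : Pt) ∈ dd M (itp M qa)
      simp only [qa, nRa, itp]
      refine sub_ddd ⟨sub_ddd rfl, 1, ?_⟩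
      rw [rp5, Multiset.replicate_one]
    · have := Multiset.eq_of_mem_replicate hp
      subst this
      show ({6} : Pt) ∈ dd M (itp M qb)
      simp only [qb, nRb, itp]
      refine sub_ddd ⟨sub_ddd rfl, 1, ?_⟩
      rw [rp6, Multiset.replicate_one]
    · have := Multiset.mem_singleton.mp hp
      subst this
      show ({c₀.q + 8} : Pt) ∈ dd M (itp M (nSt c₀.q))
      simp only [nSt, itp]
      rw [sgl_nat]
      exact sub_ddd rfl
  have hsum : (Δ.map Prod.snd).sum = (rp5 c₀.a + rp6 c₀.b) + ({c₀.q + 8} : Pt) := by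
    rw [hΔ]
    simp only [Multiset.map_add, Multiset.map_map, Multiset.map_replicate,
      Multiset.map_singleton, Multiset.sum_add, Function.comp]
    rw [Multiset.sum_replicate, Multiset.sum_replicate, Multiset.nsmul_singleton,
      Multiset.nsmul_singleton]
    have hz : ((PiCtx M).map (fun _ => (0 : Pt))).sum = 0 := by
      rw [Multiset.map_const', Multiset.sum_replicate, smul_zero]
    rw [hz, Multiset.sum_singleton]
    rw [zero_add]
    rfl
  have hm := sound M h ((Δ.map Prod.snd).sum) ⟨Δ, hfst, hdual, rfl⟩
  rw [hsum] at hm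
  obtain ⟨k, l, heq, hH⟩ := invst hm
  have h5 := congrArg (Multiset.count 5) heq
  have h6 := congrArg (Multiset.count 6) heq
  simp [rp5, rp6, Multiset.count_replicate] at h5 h6
  subst h5
  subst h6
  exact hH


/-- If the MSEL_Σ₂ sequent `⊢ ?^∞Π, ⟨c₀⟩` is derivable in the
(unfocused) sequent calculus, then the two-register Minsky machine halts from
the initial configuration `c₀`. -/
theorem derivable_implies_halting (M : Prog) (hdet : Deterministic M)
    (hwf : WellFormed M) (c₀ : Cfg)
    (h : Der (encSeq M c₀)) : Halts M c₀ := by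
  exact derivable_implies_halting' M hwf c₀ h

end Msel
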